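/- arXiv:math/9908164 — 2 statements merged into one kernel-verified Lean document; each statement's English description precedes it below -/
import Mathlib

section
/- Let V = a log ρ + (1/2)(b + c/ε) log((η−ε+√(ρ²+(η−ε)²))/ρ) + (1/2)(b − c/ε) log((η+ε+√(ρ²+(η+ε)²))/ρ) with ε = 1. Under the substitution ρ = √(R²−1) sin θ, η = R cos θ (with R > 1, 0 < θ < π), one has ρ V_η = (bR + c cos θ)√(R²−1} sin θ / (R² − cos²θ) and ρ V_ρ = (a(R² − cos²θ) − b(R²−1)cos θ + cR sin²θ)/(R² − cos²θ). -/
lemma aux1 (ρ k x : ℝ) (hρ : 0 < ρ) :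
    HasDerivAt (fun t : ℝ => Real.log (t + k + Real.sqrt (ρ^2 + (t + k)^2)))
      (1 / Real.sqrt (ρ^2 + (x + k)^2)) x := by
  have hpos : 0 < ρ^2 + (x+k)^2 := by positivity
  set S := Real.sqrt (ρ^2 + (x+k)^2) with hSdef
  have hS0 : 0 < S := Real.sqrt_pos.mpr hpos
  have habs : |x+k| < S := by
    rw [hSdef, ← Real.sqrt_sq_eq_abs]
    exact Real.sqrt_lt_sqrt (sq_nonneg _) (by nlinarith)
  have hsum : 0 < x + k + S := by
    have := neg_abs_le (x+k); linarith
  have hu : HasDerivAt (fun t : ℝ => t + k) 1 x := (hasDerivAt_id x).add_const k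
  have hsq : HasDerivAt (fun t : ℝ => ρ^2 + (t+k)^2) (2*(x+k)) x := by
    have := (hu.pow 2).const_add (ρ^2)
    simpa using this
  have hsqrt : HasDerivAt (fun t : ℝ => Real.sqrt (ρ^2+(t+k)^2)) (2*(x+k)/(2*S)) x :=
    hsq.sqrt hpos.ne'
  have hlog := (hu.add hsqrt).log hsum.ne'
  convert hlog using 1
  · rfl
  show 1 / S = (1 + 2*(x+k)/(2*S)) / (x + k + S)
  field_simp
  ring

lemma aux2 (k x : ℝ) (hx : 0 < x) :
    HasDerivAt (fun s : ℝ => Real.log (k + Real.sqrt (s^2 + k^2)) - Real.log s)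
      (-k / (x * Real.sqrt (x^2 + k^2))) x := by
  have hpos : 0 < x^2 + k^2 := by positivity
  set S := Real.sqrt (x^2 + k^2) with hSdef
  have hS0 : 0 < S := Real.sqrt_pos.mpr hpos
  have hSsq : S ^ 2 = x ^ 2 + k ^ 2 := Real.sq_sqrt hpos.le
  have habs : |k| < S := by
    rw [hSdef, ← Real.sqrt_sq_eq_abs]
    exact Real.sqrt_lt_sqrt (sq_nonneg _) (by nlinarith)
  have hsum : 0 < k + S := by
    have := neg_abs_le k; linarith
  have hsq : HasDerivAt (fun s : ℝ => s^2 + k^2) (2*x) x := by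
    simpa using (hasDerivAt_pow 2 x).add_const (k^2)
  have hsqrt : HasDerivAt (fun s : ℝ => Real.sqrt (s^2+k^2)) (2*x/(2*S)) x :=
    hsq.sqrt hpos.ne'
  have hlog := (hsqrt.const_add k).log hsum.ne'
  have h := hlog.sub (Real.hasDerivAt_log hx.ne')
  refine h.congr_deriv ?_
  symm
  show -k / (x * S) = 2*x/(2*S)/(k+S) - x⁻¹
  field_simp
  linear_combination hSsq

/-- Eguchi–Hanson II, ε = 1: with
`V = a log ρ + ½(b+c) log((η-1+√(ρ²+(η-1)²))/ρ) + ½(b-c) log((η+1+√(ρ²+(η+1)²))/ρ)`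
and the substitution `ρ = √(R²-1) sin θ`, `η = R cos θ` (R > 1, 0 < θ < π):
`ρ V_η = (bR + c cos θ)√(R²-1) sin θ/(R² - cos²θ)` and
`ρ V_ρ = (a(R² - cos²θ) - b(R²-1)cos θ + cR sin²θ)/(R² - cos²θ)`. -/
theorem eguchiHanson_monopole (a b c : ℝ) :
    ∀ R θ : ℝ, 1 < R → 0 < θ → θ < Real.pi →
      (let ρ : ℝ := Real.sqrt (R^2 - 1) * Real.sin θ
       let η : ℝ := R * Real.cos θ
       ρ * deriv (fun t : ℝ =>
          a * Real.log ρ +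
          (1/2) * (b + c) * (Real.log (t - 1 + Real.sqrt (ρ^2 + (t - 1)^2)) - Real.log ρ) +
          (1/2) * (b - c) * (Real.log (t + 1 + Real.sqrt (ρ^2 + (t + 1)^2)) - Real.log ρ)) η
        = (b * R + c * Real.cos θ) * Real.sqrt (R^2 - 1) * Real.sin θ /
            (R^2 - (Real.cos θ)^2)) ∧
      (let ρ : ℝ := Real.sqrt (R^2 - 1) * Real.sin θ
       let η : ℝ := R * Real.cos θ
       ρ * deriv (fun s : ℝ =>
          a * Real.log s +
          (1/2) * (b + c) * (Real.log (η - 1 + Real.sqrt (s^2 + (η - 1)^2)) - Real.log s) +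
          (1/2) * (b - c) * (Real.log (η + 1 + Real.sqrt (s^2 + (η + 1)^2)) - Real.log s)) ρ
        = (a * (R^2 - (Real.cos θ)^2) - b * (R^2 - 1) * Real.cos θ +
            c * R * (Real.sin θ)^2) / (R^2 - (Real.cos θ)^2)) := by
  intro R θ hR hθ1 hθ2
  have hsin : 0 < Real.sin θ := Real.sin_pos_of_pos_of_lt_pi hθ1 hθ2
  have hR1 : (0:ℝ) < R^2 - 1 := by nlinarith
  have hq : Real.sqrt (R^2 - 1) ^ 2 = R^2 - 1 := Real.sq_sqrt hR1.le
  have hq0 : 0 < Real.sqrt (R^2 - 1) := Real.sqrt_pos.mpr hR1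
  set ρ : ℝ := Real.sqrt (R^2 - 1) * Real.sin θ with hρdef
  set η : ℝ := R * Real.cos θ with hηdef
  have hρ : 0 < ρ := mul_pos hq0 hsin
  have hc1 : Real.cos θ ≤ 1 := Real.cos_le_one θ
  have hc2 : -1 ≤ Real.cos θ := Real.neg_one_le_cos θ
  have hm0 : 0 < R - Real.cos θ := by linarith
  have hp0 : 0 < R + Real.cos θ := by linarith
  have hden : R^2 - (Real.cos θ)^2 ≠ 0 := by nlinarith
  have hsinsq : Real.sin θ ^ 2 = 1 - Real.cos θ ^ 2 := Real.sin_sq θ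
  have hρsq : ρ^2 = (R^2 - 1) * Real.sin θ ^ 2 := by
    rw [hρdef, mul_pow, hq]
  have hSm : Real.sqrt (ρ^2 + (η - 1)^2) = R - Real.cos θ := by
    rw [show ρ^2 + (η - 1)^2 = (R - Real.cos θ)^2 by
      rw [hρsq, hsinsq, hηdef]; ring]
    exact Real.sqrt_sq hm0.le
  have hSp : Real.sqrt (ρ^2 + (η + 1)^2) = R + Real.cos θ := by
    rw [show ρ^2 + (η + 1)^2 = (R + Real.cos θ)^2 by
      rw [hρsq, hsinsq, hηdef]; ring]
    exact Real.sqrt_sq hp0.le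
  constructor
  · show ρ * deriv (fun t : ℝ =>
          a * Real.log ρ +
          (1/2) * (b + c) * (Real.log (t - 1 + Real.sqrt (ρ^2 + (t - 1)^2)) - Real.log ρ) +
          (1/2) * (b - c) * (Real.log (t + 1 + Real.sqrt (ρ^2 + (t + 1)^2)) - Real.log ρ)) η
        = (b * R + c * Real.cos θ) * Real.sqrt (R^2 - 1) * Real.sin θ /
            (R^2 - (Real.cos θ)^2)
    have h1 := aux1 ρ (-1) η hρ
    simp only [← sub_eq_add_neg] at h1
    have h2 := aux1 ρ 1 η hρ
    have hd : HasDerivAt (fun t : ℝ =>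
          a * Real.log ρ +
          (1/2) * (b + c) * (Real.log (t - 1 + Real.sqrt (ρ^2 + (t - 1)^2)) - Real.log ρ) +
          (1/2) * (b - c) * (Real.log (t + 1 + Real.sqrt (ρ^2 + (t + 1)^2)) - Real.log ρ))
        ((1/2) * (b + c) * (1 / Real.sqrt (ρ^2 + (η - 1)^2)) +
         (1/2) * (b - c) * (1 / Real.sqrt (ρ^2 + (η + 1)^2))) η :=
      (((h1.sub_const (Real.log ρ)).const_mul ((1/2)*(b+c))).const_add
        (a * Real.log ρ)).add ((h2.sub_const (Real.log ρ)).const_mul ((1/2)*(b-c)))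
    rw [hd.deriv, hSm, hSp, hρdef]
    field_simp
    ring
  · show ρ * deriv (fun s : ℝ =>
          a * Real.log s +
          (1/2) * (b + c) * (Real.log (η - 1 + Real.sqrt (s^2 + (η - 1)^2)) - Real.log s) +
          (1/2) * (b - c) * (Real.log (η + 1 + Real.sqrt (s^2 + (η + 1)^2)) - Real.log s)) ρ
        = (a * (R^2 - (Real.cos θ)^2) - b * (R^2 - 1) * Real.cos θ +
            c * R * (Real.sin θ)^2) / (R^2 - (Real.cos θ)^2)
    have h1 := aux2 (η - 1) ρ hρ
    have h2 := aux2 (η + 1) ρ hρ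
    have hd : HasDerivAt (fun s : ℝ =>
          a * Real.log s +
          (1/2) * (b + c) * (Real.log (η - 1 + Real.sqrt (s^2 + (η - 1)^2)) - Real.log s) +
          (1/2) * (b - c) * (Real.log (η + 1 + Real.sqrt (s^2 + (η + 1)^2)) - Real.log s))
        ((a * ρ⁻¹ + (1/2) * (b + c) * (-(η - 1) / (ρ * Real.sqrt (ρ^2 + (η - 1)^2)))) +
         (1/2) * (b - c) * (-(η + 1) / (ρ * Real.sqrt (ρ^2 + (η + 1)^2)))) ρ :=
      (((Real.hasDerivAt_log hρ.ne').const_mul a).add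
        (h1.const_mul ((1/2)*(b+c)))).add (h2.const_mul ((1/2)*(b-c)))
    rw [hd.deriv, hSm, hSp, hηdef]
    rw [show c * R * Real.sin θ ^ 2 = c * R * (1 - Real.cos θ ^ 2) by rw [hsinsq]]
    field_simp
    ring
end

section
/- For the metric g = dR²/(R²+1) + (R²+1)ds² + dθ² + sin²θ dφ² and the Killing field K = b∂_s + c∂_φ with (b,c) ≠ (0,0), the quotient metric g − g(K,·)⊗g(K,·)/g(K,K), expressed in the coordinates χ = bs + cφ, ψ = bφ − cs adapted so that K ∝ ∂/∂χ, restricts on the ψ-directions to (b²+c²)·[dR²/(R²+1) + dθ² + (R²+1)sin²θ/(b²(R²+1)+c²sin²θ) dψ²] up to overall normalization; in particular g(K,K) = b²(R²+1) + c² sin²θ. -/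
/-- For the metric `g = dR²/(R²+1) + (R²+1)ds² + dθ² + sin²θ dφ²`
and the Killing field `K = b ∂_s + c ∂_φ` with `(b,c) ≠ (0,0)`, in the adapted
coordinates `χ = bs + cφ`, `ψ = bφ - cs` (so `∂/∂ψ = (-c ∂_s + b ∂_φ)/(b²+c²)`),
one has `g(K,K) = b²(R²+1) + c² sin²θ` and the coefficient of `dψ²` in the
quotient metric `h = g - g(K,·)²/g(K,K)` equals
`(R²+1) sin²θ / (b²(R²+1) + c² sin²θ)`. -/
theorem quotient_metric_coefficients (b c R θ : ℝ) (hbc : (b, c) ≠ (0, 0))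
    (hK : b^2 * (R^2 + 1) + c^2 * (Real.sin θ)^2 ≠ 0) :
    let gdiag : Fin 4 → ℝ := ![1 / (R^2 + 1), R^2 + 1, 1, (Real.sin θ)^2]
    let gv : (Fin 4 → ℝ) → (Fin 4 → ℝ) → ℝ := fun X Y => ∑ i, gdiag i * X i * Y i
    let K : Fin 4 → ℝ := ![0, b, 0, c]
    let W : Fin 4 → ℝ := ![0, -c / (b^2 + c^2), 0, b / (b^2 + c^2)]
    gv K K = b^2 * (R^2 + 1) + c^2 * (Real.sin θ)^2 ∧
    gv W W - (gv K W)^2 / gv K K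
      = (R^2 + 1) * (Real.sin θ)^2 / (b^2 * (R^2 + 1) + c^2 * (Real.sin θ)^2) := by
  intro gdiag gv K W
  have hbc2 : b^2 + c^2 ≠ 0 := by
    intro h
    have hb : b = 0 := by nlinarith [sq_nonneg b, sq_nonneg c]
    have hc : c = 0 := by nlinarith [sq_nonneg b, sq_nonneg c]
    exact hbc (by simp [hb, hc])
  have h1 : gv K K = b^2 * (R^2 + 1) + c^2 * (Real.sin θ)^2 := by
    simp [gv, gdiag, K, Fin.sum_univ_four]; ring
  refine ⟨h1, ?_⟩
  have h2 : gv W W = (c^2 * (R^2+1) + b^2 * (Real.sin θ)^2) / (b^2+c^2)^2 := by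
    simp only [gv, gdiag, W, Fin.sum_univ_four]
    simp [Matrix.cons_val_zero, Matrix.cons_val_one]
    field_simp
  have h3 : gv K W = (-(b*c) * (R^2+1) + b*c * (Real.sin θ)^2) / (b^2+c^2) := by
    simp only [gv, gdiag, K, W, Fin.sum_univ_four]
    simp [Matrix.cons_val_zero, Matrix.cons_val_one]
    field_simp
  rw [h1, h2, h3]
  generalize hD : b^2 * (R^2 + 1) + c^2 * (Real.sin θ)^2 = D at hK ⊢
  field_simp
  subst hD
  ring
end
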